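/- Let n ≥ 4 and L > 2n be integers. For every subset S ⊆ Λ_L with |S| = n², the number of unordered adjacent pairs contained in S satisfies e(S) ≤ 2n(n−1); equivalently, every configuration with n² particles has Hamiltonian H ≥ −2n(n−1). -/

import Mathlib

open scoped Classical

noncomputable section

/-- A site of the discrete torus `Λ_L`. -/
abbrev Site (L : ℕ) := ZMod L × ZMod L

/-- Two sites of the discrete torus are adjacent if their difference is a unit vector. -/
def torusAdj (L : ℕ) (u v : Site L) : Prop :=
  u - v = (1, 0) ∨ u - v = (-1, 0) ∨ u - v = (0, 1) ∨ u - v = (0, -1)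

/-- `e(S)`: the number of unordered pairs of adjacent sites contained in `S`. -/
def torusE (L : ℕ) (S : Finset (Site L)) : ℕ :=
  ((S ×ˢ S).filter fun p => torusAdj L p.1 p.2).card / 2

lemma cycle_closed {L : ℕ} [NeZero L] (T : Finset (ZMod L))
    (hcl : ∀ x ∈ T, x + 1 ∈ T) (hne : T.Nonempty) : T = Finset.univ := by
  obtain ⟨x₀, hx₀⟩ := hne
  have key : ∀ k : ℕ, x₀ + (k : ZMod L) ∈ T := by
    intro k
    induction k with
    | zero => simpa using hx₀
    | succ m ih => push_cast; rw [← add_assoc]; exact hcl _ ih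
  apply Finset.eq_univ_of_forall
  intro y
  obtain ⟨k, hk⟩ := ZMod.natCast_zmod_surjective (y - x₀)
  have := key k
  rw [hk] at this
  simpa using this

lemma cycle_bound {L : ℕ} [NeZero L] (T : Finset (ZMod L)) (hT : T.card < L) :
    (T.filter fun x => x + 1 ∈ T).card ≤ T.card - 1 := by
  rcases T.eq_empty_or_nonempty with h | h
  · simp [h]
  have hsub : (T.filter fun x => x + 1 ∈ T) ⊆ T := Finset.filter_subset _ _
  have hne : (T.filter fun x => x + 1 ∈ T) ≠ T := by
    intro heq
    have hcl : ∀ x ∈ T, x + 1 ∈ T := by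
      intro x hx
      have := heq ▸ hx
      exact (Finset.mem_filter.mp this).2
    have := cycle_closed T hcl h
    rw [this] at hT
    simp [ZMod.card] at hT
  have := Finset.card_lt_card (lt_of_le_of_ne hsub hne)
  omega



lemma count_shift (L : ℕ) (S : Finset (Site L)) (d : Site L) :
    ((S ×ˢ S).filter fun p => p.1 - p.2 = d).card = (S.filter fun v => v + d ∈ S).card := by
  apply Finset.card_bij (fun p _ => p.2)
  · intro p hp
    simp only [Finset.mem_filter, Finset.mem_product] at hp ⊢
    obtain ⟨⟨h1, h2⟩, h3⟩ := hp
    refine ⟨h2, ?_⟩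
    have : p.1 = p.2 + d := by rw [← h3]; ring
    rwa [← this]
  · intro p hp q hq h
    simp only [Finset.mem_filter, Finset.mem_product] at hp hq
    have h1 : p.1 = p.2 + d := by rw [← hp.2]; ring
    have h2 : q.1 = q.2 + d := by rw [← hq.2]; ring
    exact Prod.ext (by rw [h1, h2, h]) h
  · intro v hv
    simp only [Finset.mem_filter] at hv
    exact ⟨(v + d, v), by simp [Finset.mem_filter, hv.1, hv.2], rfl⟩

lemma count_neg (L : ℕ) (S : Finset (Site L)) (d : Site L) :
    ((S ×ˢ S).filter fun p => p.1 - p.2 = -d).card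
      = ((S ×ˢ S).filter fun p => p.1 - p.2 = d).card := by
  apply Finset.card_bij (fun p _ => (p.2, p.1))
  · intro p hp
    simp only [Finset.mem_filter, Finset.mem_product] at hp ⊢
    refine ⟨⟨hp.1.2, hp.1.1⟩, ?_⟩
    have := hp.2
    have : p.2 - p.1 = d := by rw [← neg_sub, this, neg_neg]
    simpa using this
  · intro p hp q hq h
    exact Prod.ext (congrArg Prod.snd h) (congrArg Prod.fst h)
  · intro p hp
    simp only [Finset.mem_filter, Finset.mem_product] at hp
    refine ⟨(p.2, p.1), ?_, rfl⟩
    simp only [Finset.mem_filter, Finset.mem_product]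
    refine ⟨⟨hp.1.2, hp.1.1⟩, ?_⟩
    rw [← neg_sub, hp.2]


lemma filt_disj {α β : Type*} (s : Finset α) (f : α → β) (d d' : β) (h : d ≠ d') :
    Disjoint (s.filter fun a => f a = d) (s.filter fun a => f a = d') := by
  rw [Finset.disjoint_left]
  intro a ha hb
  exact h (((Finset.mem_filter.mp ha).2.symm).trans (Finset.mem_filter.mp hb).2)

lemma torusE_eq (L : ℕ) (hL3 : 3 ≤ L) (S : Finset (Site L)) :
    torusE L S = (S.filter fun v => v + ((1:ZMod L), (0:ZMod L)) ∈ S).card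
      + (S.filter fun v => v + ((0:ZMod L), (1:ZMod L)) ∈ S).card := by
  have hone : (1 : ZMod L) ≠ 0 := by
    intro h
    have : ((1:ℕ) : ZMod L) = 0 := by exact_mod_cast h
    rw [ZMod.natCast_eq_zero_iff] at this
    have := Nat.le_of_dvd one_pos this
    omega
  have htwo : (1 : ZMod L) ≠ -1 := by
    intro h
    have h2 : ((2:ℕ) : ZMod L) = 0 := by
      push_cast
      linear_combination h
    rw [ZMod.natCast_eq_zero_iff] at h2
    have := Nat.le_of_dvd two_pos h2
    omega
  have hnegone : (-1 : ZMod L) ≠ 0 := fun h => hone (by rw [← neg_neg (1 : ZMod L), h]; ring)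
  have d12 : ((1:ZMod L), (0:ZMod L)) ≠ ((-1:ZMod L), (0:ZMod L)) :=
    fun h => htwo (Prod.ext_iff.mp h).1
  have d13 : ((1:ZMod L), (0:ZMod L)) ≠ ((0:ZMod L), (1:ZMod L)) :=
    fun h => hone (Prod.ext_iff.mp h).1
  have d14 : ((1:ZMod L), (0:ZMod L)) ≠ ((0:ZMod L), (-1:ZMod L)) :=
    fun h => hone (Prod.ext_iff.mp h).1
  have d23 : ((-1:ZMod L), (0:ZMod L)) ≠ ((0:ZMod L), (1:ZMod L)) :=
    fun h => hnegone (Prod.ext_iff.mp h).1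
  have d24 : ((-1:ZMod L), (0:ZMod L)) ≠ ((0:ZMod L), (-1:ZMod L)) :=
    fun h => hnegone (Prod.ext_iff.mp h).1
  have d34 : ((0:ZMod L), (1:ZMod L)) ≠ ((0:ZMod L), (-1:ZMod L)) :=
    fun h => htwo (Prod.ext_iff.mp h).2
  set T := S ×ˢ S with hT
  have disj : ∀ (d d' : Site L), d ≠ d' →
      Disjoint (T.filter fun p => p.1 - p.2 = d) (T.filter fun p => p.1 - p.2 = d') := by
    intro d d' hdd
    rw [Finset.disjoint_left]
    intro a ha hb
    simp only [Finset.mem_filter] at ha hb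
    exact hdd (ha.2.symm.trans hb.2)
  have hsplit : (T.filter fun p => torusAdj L p.1 p.2)
      = (T.filter fun p => p.1 - p.2 = ((1:ZMod L), (0:ZMod L)))
        ∪ ((T.filter fun p => p.1 - p.2 = ((-1:ZMod L), (0:ZMod L)))
        ∪ ((T.filter fun p => p.1 - p.2 = ((0:ZMod L), (1:ZMod L)))
        ∪ (T.filter fun p => p.1 - p.2 = ((0:ZMod L), (-1:ZMod L))))) := by
    ext p
    simp only [Finset.mem_filter, Finset.mem_union]
    unfold torusAdj
    tauto
  have hcard : (T.filter fun p => torusAdj L p.1 p.2).card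
      = (T.filter fun p => p.1 - p.2 = ((1:ZMod L), (0:ZMod L))).card
        + ((T.filter fun p => p.1 - p.2 = ((-1:ZMod L), (0:ZMod L))).card
        + ((T.filter fun p => p.1 - p.2 = ((0:ZMod L), (1:ZMod L))).card
        + (T.filter fun p => p.1 - p.2 = ((0:ZMod L), (-1:ZMod L))).card)) := by
    rw [hsplit]
    rw [Finset.card_union_of_disjoint, Finset.card_union_of_disjoint,
      Finset.card_union_of_disjoint]
    · exact disj _ _ d34
    · exact Finset.disjoint_union_right.mpr ⟨disj _ _ d23, disj _ _ d24⟩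
    · exact Finset.disjoint_union_right.mpr ⟨disj _ _ d12,
        Finset.disjoint_union_right.mpr ⟨disj _ _ d13, disj _ _ d14⟩⟩
  have hneg1 : ((-1:ZMod L), (0:ZMod L)) = -((1:ZMod L), (0:ZMod L)) := by
    simp [Prod.ext_iff]
  have hneg2 : ((0:ZMod L), (-1:ZMod L)) = -((0:ZMod L), (1:ZMod L)) := by
    simp [Prod.ext_iff]
  have e1 := count_shift L S ((1:ZMod L), (0:ZMod L))
  have e3 := count_shift L S ((0:ZMod L), (1:ZMod L))
  have e2 : (T.filter fun p => p.1 - p.2 = ((-1:ZMod L), (0:ZMod L))).card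
      = (S.filter fun v => v + ((1:ZMod L), (0:ZMod L)) ∈ S).card := by
    calc (T.filter fun p => p.1 - p.2 = ((-1:ZMod L), (0:ZMod L))).card
        = (T.filter fun p => p.1 - p.2 = -((1:ZMod L), (0:ZMod L))).card := by rw [← hneg1]
      _ = _ := by rw [hT, count_neg, count_shift]
  have e4 : (T.filter fun p => p.1 - p.2 = ((0:ZMod L), (-1:ZMod L))).card
      = (S.filter fun v => v + ((0:ZMod L), (1:ZMod L)) ∈ S).card := by
    calc (T.filter fun p => p.1 - p.2 = ((0:ZMod L), (-1:ZMod L))).card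
        = (T.filter fun p => p.1 - p.2 = -((0:ZMod L), (1:ZMod L))).card := by rw [← hneg2]
      _ = _ := by rw [hT, count_neg, count_shift]
  unfold torusE
  rw [← hT, hcard, e2, e4]
  rw [← hT] at e1 e3
  rw [e1, e3]
  have key : ∀ a b : ℕ, (a + (a + (b + b))) / 2 = a + b := by intro a b; omega
  exact key _ _

lemma cycle_bound2 {L : ℕ} [NeZero L] (T : Finset (ZMod L)) :
    (T.filter fun x => x + 1 ∈ T).card + (if T.Nonempty then 1 else 0)
      ≤ T.card + (if T.card = L then 1 else 0) := by
  have hle : (T.filter fun x => x + 1 ∈ T).card ≤ T.card := Finset.card_filter_le _ _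
  by_cases hfull : T.card = L
  · rw [if_pos hfull]
    split <;> omega
  · rcases T.eq_empty_or_nonempty with he | hne
    · subst he
      simp
    · rw [if_pos hne, if_neg hfull]
      have hLle : T.card ≤ L := by
        have := Finset.card_le_univ T
        rwa [ZMod.card] at this
      have hcb := cycle_bound T (by omega)
      have hpos := Finset.card_pos.mpr hne
      omega

lemma row_bound {L : ℕ} [NeZero L] (S : Finset (Site L)) :
    (S.filter fun v => v + ((1:ZMod L), (0:ZMod L)) ∈ S).card
      + (Finset.univ.filter fun y : ZMod L => (S.filter fun v => v.2 = y).Nonempty).card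
    ≤ S.card
      + (Finset.univ.filter fun y : ZMod L => (S.filter fun v => v.2 = y).card = L).card := by
  set F := S.filter (fun v => v + ((1:ZMod L), (0:ZMod L)) ∈ S) with hFdef
  have hF : F.card = ∑ y : ZMod L, (F.filter fun v => v.2 = y).card :=
    Finset.card_eq_sum_card_fiberwise (fun v _ => Finset.mem_univ _)
  have hScard : S.card = ∑ y : ZMod L, (S.filter fun v => v.2 = y).card :=
    Finset.card_eq_sum_card_fiberwise (fun v _ => Finset.mem_univ _)
  have hrowT : ∀ y : ZMod L,
      ((S.filter fun v => v.2 = y).image Prod.fst).card = (S.filter fun v => v.2 = y).card := by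
    intro y
    apply Finset.card_image_of_injOn
    intro a ha b hb hab
    simp only [Finset.mem_coe, Finset.mem_filter] at ha hb
    exact Prod.ext hab (ha.2.trans hb.2.symm)
  have hfib : ∀ y : ZMod L, (F.filter fun v => v.2 = y).card
      = (((S.filter fun v => v.2 = y).image Prod.fst).filter
          fun x => x + 1 ∈ (S.filter fun v => v.2 = y).image Prod.fst).card := by
    intro y
    apply Finset.card_bij (fun v _ => v.1)
    · intro v hv
      simp only [Finset.mem_filter, hFdef] at hv
      obtain ⟨⟨hvS, hvshift⟩, hvy⟩ := hv
      simp only [Finset.mem_filter, Finset.mem_image]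
      refine ⟨⟨v, ⟨hvS, hvy⟩, rfl⟩,
        ⟨v + ((1:ZMod L), (0:ZMod L)), ⟨hvshift, ?_⟩, rfl⟩⟩
      show v.2 + 0 = y
      rw [add_zero]; exact hvy
    · intro u hu v hv huv
      simp only [Finset.mem_filter, hFdef] at hu hv
      exact Prod.ext huv (hu.2.trans hv.2.symm)
    · intro x hx
      simp only [Finset.mem_filter, Finset.mem_image] at hx
      obtain ⟨⟨v, hv, hvx⟩, w, hw, hwx⟩ := hx
      refine ⟨v, ?_, hvx⟩
      simp only [Finset.mem_filter, hFdef]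
      refine ⟨⟨hv.1, ?_⟩, hv.2⟩
      have : v + ((1:ZMod L), (0:ZMod L)) = w := by
        apply Prod.ext
        · show v.1 + 1 = w.1
          rw [hvx, hwx]
        · show v.2 + 0 = w.2
          rw [add_zero, hv.2, hw.2]
      rw [this]; exact hw.1
  have hper : ∀ y : ZMod L,
      (F.filter fun v => v.2 = y).card
        + (if (S.filter fun v => v.2 = y).Nonempty then 1 else 0)
      ≤ (S.filter fun v => v.2 = y).card
        + (if (S.filter fun v => v.2 = y).card = L then 1 else 0) := by
    intro y
    rw [hfib y]
    have key := cycle_bound2 ((S.filter fun v => v.2 = y).image Prod.fst)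
    rw [hrowT y] at key
    simp only [Finset.image_nonempty] at key
    exact key
  calc F.card + (Finset.univ.filter fun y : ZMod L =>
          (S.filter fun v => v.2 = y).Nonempty).card
      = ∑ y : ZMod L, ((F.filter fun v => v.2 = y).card
          + (if (S.filter fun v => v.2 = y).Nonempty then 1 else 0)) := by
        rw [Finset.sum_add_distrib, ← hF]
        congr 1
        exact Finset.card_filter _ _
    _ ≤ ∑ y : ZMod L, ((S.filter fun v => v.2 = y).card
          + (if (S.filter fun v => v.2 = y).card = L then 1 else 0)) :=
        Finset.sum_le_sum (fun y _ => hper y)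
    _ = S.card + (Finset.univ.filter fun y : ZMod L =>
          (S.filter fun v => v.2 = y).card = L).card := by
        rw [Finset.sum_add_distrib, ← hScard]
        congr 1
        exact (Finset.card_filter _ _).symm

lemma col_bound {L : ℕ} [NeZero L] (S : Finset (Site L)) :
    (S.filter fun v => v + ((0:ZMod L), (1:ZMod L)) ∈ S).card
      + (Finset.univ.filter fun x : ZMod L => (S.filter fun v => v.1 = x).Nonempty).card
    ≤ S.card
      + (Finset.univ.filter fun x : ZMod L => (S.filter fun v => v.1 = x).card = L).card := by
  set S' := S.image Prod.swap with hS'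
  have hmem : ∀ (A : Finset (Site L)) (w : Site L), w ∈ A.image Prod.swap ↔ w.swap ∈ A := by
    intro A w
    simp only [Finset.mem_image]
    constructor
    · rintro ⟨v, hv, rfl⟩; simpa using hv
    · intro h; exact ⟨w.swap, h, Prod.swap_swap w⟩
  have hsw : ∀ w : Site L, (w + ((1:ZMod L), (0:ZMod L))).swap
      = w.swap + ((0:ZMod L), (1:ZMod L)) := by
    intro w
    apply Prod.ext
    · show (w + ((1:ZMod L), (0:ZMod L))).2 = w.2 + 0
      rfl
    · rfl
  have ha : (S'.filter fun v => v + ((1:ZMod L), (0:ZMod L)) ∈ S')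
      = (S.filter fun v => v + ((0:ZMod L), (1:ZMod L)) ∈ S).image Prod.swap := by
    ext w
    rw [hmem, Finset.mem_filter, Finset.mem_filter, hS', hmem, hmem, hsw]
  have hb : ∀ x : ZMod L, (S'.filter fun v => v.2 = x)
      = (S.filter fun v => v.1 = x).image Prod.swap := by
    intro x
    ext w
    rw [hmem, Finset.mem_filter, Finset.mem_filter, hS', hmem]
    constructor
    · intro ⟨h1, h2⟩; exact ⟨h1, h2⟩
    · intro ⟨h1, h2⟩; exact ⟨h1, h2⟩
  have hcard : ∀ (A : Finset (Site L)), (A.image Prod.swap).card = A.card :=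
    fun A => Finset.card_image_of_injective A Prod.swap_injective
  have hrb := row_bound S'
  rw [ha, hcard, hS', hcard] at hrb
  have e1 : (Finset.univ.filter fun y : ZMod L => (S'.filter fun v => v.2 = y).Nonempty)
      = (Finset.univ.filter fun x : ZMod L => (S.filter fun v => v.1 = x).Nonempty) := by
    apply Finset.filter_congr
    intro x _
    rw [hb x]
    simp [Finset.image_nonempty]
  have e2 : (Finset.univ.filter fun y : ZMod L => (S'.filter fun v => v.2 = y).card = L)
      = (Finset.univ.filter fun x : ZMod L => (S.filter fun v => v.1 = x).card = L) := by
    apply Finset.filter_congr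
    intro x _
    rw [hb x, hcard]
  rw [e1, e2] at hrb
  exact hrb


set_option maxHeartbeats 2000000 in
/-- for `n ≥ 4` and `L > 2n`, every set of `n²` sites of the torus contains
at most `2n(n−1)` adjacent pairs, i.e. every configuration with `n²` particles has
Hamiltonian `H ≥ −2n(n−1)`. -/
theorem energy_lower_bound (n L : ℕ) (hn : 4 ≤ n) (hL : 2 * n < L)
    (S : Finset (Site L)) (hS : S.card = n ^ 2) :
    torusE L S ≤ 2 * n * (n - 1) := by
  haveI : NeZero L := ⟨by omega⟩
  set h := (Finset.univ.filter fun y : ZMod L => (S.filter fun v => v.2 = y).Nonempty).card with hh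
  set w := (Finset.univ.filter fun x : ZMod L => (S.filter fun v => v.1 = x).Nonempty).card with hw
  set fr := (Finset.univ.filter fun y : ZMod L => (S.filter fun v => v.2 = y).card = L).card with hfr
  set fc := (Finset.univ.filter fun x : ZMod L => (S.filter fun v => v.1 = x).card = L).card with hfc
  have hrow := row_bound S
  have hcol := col_bound S
  rw [hS] at hrow hcol
  -- fr ≤ h and fc ≤ w
  have hLpos : 0 < L := Nat.pos_of_ne_zero (NeZero.ne L)
  have hfrh : fr ≤ h := by
    apply Finset.card_le_card
    apply Finset.monotone_filter_right
    intro y _ hy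
    exact Finset.card_pos.mp (by have hy' : (S.filter fun v => v.2 = y).card = L := hy; omega)
  have hfcw : fc ≤ w := by
    apply Finset.card_le_card
    apply Finset.monotone_filter_right
    intro x _ hx
    exact Finset.card_pos.mp (by have hx' : (S.filter fun v => v.1 = x).card = L := hx; omega)
  -- n² ≤ w * h
  have hwh : n ^ 2 ≤ w * h := by
    rw [← hS]
    calc S.card ≤ ((Finset.univ.filter fun x : ZMod L => (S.filter fun v => v.1 = x).Nonempty)
        ×ˢ (Finset.univ.filter fun y : ZMod L => (S.filter fun v => v.2 = y).Nonempty)).card := by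
          apply Finset.card_le_card
          intro v hv
          rw [Finset.mem_product]
          constructor
          · simp only [Finset.mem_filter, Finset.mem_univ, true_and]
            exact ⟨v, Finset.mem_filter.mpr ⟨hv, rfl⟩⟩
          · simp only [Finset.mem_filter, Finset.mem_univ, true_and]
            exact ⟨v, Finset.mem_filter.mpr ⟨hv, rfl⟩⟩
      _ = w * h := by rw [Finset.card_product]
  -- fr * L ≤ n²
  have hfrL : fr * L ≤ n ^ 2 := by
    rw [← hS]
    have hfib : S.card = ∑ y : ZMod L, (S.filter fun v => v.2 = y).card :=
      Finset.card_eq_sum_card_fiberwise (fun v _ => Finset.mem_univ _)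
    calc fr * L = ∑ y ∈ (Finset.univ.filter fun y : ZMod L =>
          (S.filter fun v => v.2 = y).card = L), (S.filter fun v => v.2 = y).card := by
          rw [Finset.sum_congr rfl (fun y hy => (Finset.mem_filter.mp hy).2),
            Finset.sum_const, smul_eq_mul, hfr]
      _ ≤ ∑ y : ZMod L, (S.filter fun v => v.2 = y).card :=
          Finset.sum_le_sum_of_subset (Finset.filter_subset _ _)
      _ = S.card := hfib.symm
  have hfcL : fc * L ≤ n ^ 2 := by
    rw [← hS]
    have hfib : S.card = ∑ x : ZMod L, (S.filter fun v => v.1 = x).card :=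
      Finset.card_eq_sum_card_fiberwise (fun v _ => Finset.mem_univ _)
    calc fc * L = ∑ x ∈ (Finset.univ.filter fun x : ZMod L =>
          (S.filter fun v => v.1 = x).card = L), (S.filter fun v => v.1 = x).card := by
          rw [Finset.sum_congr rfl (fun x hx => (Finset.mem_filter.mp hx).2),
            Finset.sum_const, smul_eq_mul, hfc]
      _ ≤ ∑ x : ZMod L, (S.filter fun v => v.1 = x).card :=
          Finset.sum_le_sum_of_subset (Finset.filter_subset _ _)
      _ = S.card := hfib.symm
  -- full row forces all columns nonempty
  have hfull_row : 1 ≤ fr → w = L := by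
    intro hfr1
    have : (Finset.univ.filter fun y : ZMod L =>
        (S.filter fun v => v.2 = y).card = L).Nonempty := by
      rw [← Finset.card_pos]; omega
    obtain ⟨y, hy⟩ := this
    have hyL : (S.filter fun v => v.2 = y).card = L := (Finset.mem_filter.mp hy).2
    have himg : ((S.filter fun v => v.2 = y).image Prod.fst) = Finset.univ := by
      apply Finset.eq_univ_of_card
      rw [ZMod.card]
      refine Eq.trans (Finset.card_image_of_injOn ?_) hyL
      intro a ha b hb hab
      simp only [Finset.mem_coe, Finset.mem_filter] at ha hb
      exact Prod.ext hab (ha.2.trans hb.2.symm)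
    have hall : ∀ x : ZMod L, (S.filter fun v => v.1 = x).Nonempty := by
      intro x
      have hx : x ∈ ((S.filter fun v => v.2 = y).image Prod.fst) := by rw [himg]; simp
      obtain ⟨v, hv, hvx⟩ := Finset.mem_image.mp hx
      exact ⟨v, Finset.mem_filter.mpr ⟨(Finset.mem_filter.mp hv).1, hvx⟩⟩
    rw [hw, Finset.filter_true_of_mem (fun x _ => hall x), Finset.card_univ, ZMod.card]
  have hfull_col : 1 ≤ fc → h = L := by
    intro hfc1
    have : (Finset.univ.filter fun x : ZMod L =>
        (S.filter fun v => v.1 = x).card = L).Nonempty := by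
      rw [← Finset.card_pos]; omega
    obtain ⟨x, hx⟩ := this
    have hxL : (S.filter fun v => v.1 = x).card = L := (Finset.mem_filter.mp hx).2
    have himg : ((S.filter fun v => v.1 = x).image Prod.snd) = Finset.univ := by
      apply Finset.eq_univ_of_card
      rw [ZMod.card]
      refine Eq.trans (Finset.card_image_of_injOn ?_) hxL
      intro a ha b hb hab
      simp only [Finset.mem_coe, Finset.mem_filter] at ha hb
      exact Prod.ext (ha.2.trans hb.2.symm) hab
    have hall : ∀ y : ZMod L, (S.filter fun v => v.2 = y).Nonempty := by
      intro y
      have hy : y ∈ ((S.filter fun v => v.1 = x).image Prod.snd) := by rw [himg]; simp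
      obtain ⟨v, hv, hvy⟩ := Finset.mem_image.mp hy
      exact ⟨v, Finset.mem_filter.mpr ⟨(Finset.mem_filter.mp hv).1, hvy⟩⟩
    rw [hh, Finset.filter_true_of_mem (fun y _ => hall y), Finset.card_univ, ZMod.card]
  -- key inequality
  have hkey : 2 * n + fr + fc ≤ h + w := by
    rcases Nat.eq_zero_or_pos fr with hfr0 | hfr1
    · rcases Nat.eq_zero_or_pos fc with hfc0 | hfc1
      · -- AM-GM case
        rw [hfr0, hfc0, add_zero, add_zero]
        by_contra hcon
        push_neg at hcon
        nlinarith [two_mul_le_add_sq h w, hwh]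
      · have hhL := hfull_col hfc1
        have h2fc : 2 * fc < n := by nlinarith
        omega
    · have hwL := hfull_row hfr1
      have h2fr : 2 * fr < n := by nlinarith
      rcases Nat.eq_zero_or_pos fc with hfc0 | hfc1
      · omega
      · have hhL := hfull_col hfc1
        have h2fc : 2 * fc < n := by nlinarith
        omega
  -- conclude
  have hE := torusE_eq L (by omega) S
  have : torusE L S + 2 * n ≤ 2 * n ^ 2 := by omega
  have hgoal : 2 * n * (n - 1) + 2 * n = 2 * n ^ 2 := by
    cases n with
    | zero => rfl
    | succ m => simp only [Nat.succ_sub_one]; ring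
  omega
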